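/- Let g : [0,1] → {1,0,−1} be Lebesgue measurable and suppose that for all x,y,z ∈ [0,1] with x+y+z = 1 the multiset {g(x),g(y),g(z)} is consistent. Then there exists κ ∈ ℝ such that g(x) = sgn(κ(x − 1/3)) for all x ∈ [0,1]. -/

import Mathlib

def Consistent (x y z : ℤ) : Prop :=
  ({x, y, z} : Multiset ℤ) = {1, 1, -1} ∨
  ({x, y, z} : Multiset ℤ) = {1, 0, -1} ∨
  ({x, y, z} : Multiset ℤ) = {1, -1, -1} ∨
  ({x, y, z} : Multiset ℤ) = {0, 0, 0}

open MeasureTheory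
open scoped ENNReal

section ConsHelpers
variable {a b c : ℤ}

lemma L_C1 (h : Consistent (-1) (-1) c) (hr : c = 1 ∨ c = 0 ∨ c = -1) : c = 1 := by
  rcases hr with rfl|rfl|rfl <;> first | rfl | (revert h; unfold Consistent; decide)

lemma L_C2 (h : Consistent 1 1 c) (hr : c = 1 ∨ c = 0 ∨ c = -1) : c = -1 := by
  rcases hr with rfl|rfl|rfl <;> first | rfl | (revert h; unfold Consistent; decide)

lemma L_C3 (h : Consistent 1 0 c) (hr : c = 1 ∨ c = 0 ∨ c = -1) : c = -1 := by
  rcases hr with rfl|rfl|rfl <;> first | rfl | (revert h; unfold Consistent; decide)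

lemma L_C5 (h : Consistent 0 0 c) (hr : c = 1 ∨ c = 0 ∨ c = -1) : c = 0 := by
  rcases hr with rfl|rfl|rfl <;> first | rfl | (revert h; unfold Consistent; decide)

lemma L_C6 (h : Consistent a a a) (hr : a = 1 ∨ a = 0 ∨ a = -1) : a = 0 := by
  rcases hr with rfl|rfl|rfl <;> first | rfl | (revert h; unfold Consistent; decide)

lemma L_C7 (h : Consistent 1 c c) (hr : c = 1 ∨ c = 0 ∨ c = -1) : c = -1 := by
  rcases hr with rfl|rfl|rfl <;> first | rfl | (revert h; unfold Consistent; decide)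

lemma L_C8 (h : Consistent (-1) c c) (hr : c = 1 ∨ c = 0 ∨ c = -1) : c = 1 := by
  rcases hr with rfl|rfl|rfl <;> first | rfl | (revert h; unfold Consistent; decide)

lemma L_C9 (h : Consistent 0 c c) (hr : c = 1 ∨ c = 0 ∨ c = -1) : c = 0 := by
  rcases hr with rfl|rfl|rfl <;> first | rfl | (revert h; unfold Consistent; decide)

lemma L_pair (h : Consistent a b 0) (hra : a = 1 ∨ a = 0 ∨ a = -1)
    (hrb : b = 1 ∨ b = 0 ∨ b = -1) : b = -a := by
  rcases hra with rfl|rfl|rfl <;> rcases hrb with rfl|rfl|rfl <;>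
    first | rfl | (revert h; unfold Consistent; decide)

lemma L_C10 (h : Consistent 1 a b) (hra : a = 1 ∨ a = 0 ∨ a = -1)
    (hrb : b = 1 ∨ b = 0 ∨ b = -1) : a = -1 ∨ b = -1 := by
  rcases hra with rfl|rfl|rfl <;> rcases hrb with rfl|rfl|rfl <;>
    first | (left; rfl) | (right; rfl) |
      (revert h; unfold Consistent; intro h; exact absurd h (by decide))

lemma L_C11 (h : Consistent (-1) a b) (hra : a = 1 ∨ a = 0 ∨ a = -1)
    (hrb : b = 1 ∨ b = 0 ∨ b = -1) : a = 1 ∨ b = 1 := by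
  rcases hra with rfl|rfl|rfl <;> rcases hrb with rfl|rfl|rfl <;>
    first | (left; rfl) | (right; rfl) |
      (revert h; unfold Consistent; intro h; exact absurd h (by decide))

lemma L_neg (h : Consistent a b c) : Consistent (-a) (-b) (-c) := by
  have key : ∀ x y z : ℤ, ({-x, -y, -z} : Multiset ℤ) = Multiset.map (fun t => -t) {x, y, z} := by
    intro x y z; rfl
  rcases h with h|h|h|h <;> rw [Consistent, key, h] <;> decide

end ConsHelpers

def HRange (g : ℝ → ℤ) : Prop := ∀ x ∈ Set.Icc (0:ℝ) 1, g x = 1 ∨ g x = 0 ∨ g x = -1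
def HCons (g : ℝ → ℤ) : Prop := ∀ x ∈ Set.Icc (0:ℝ) 1, ∀ y ∈ Set.Icc (0:ℝ) 1,
    ∀ z ∈ Set.Icc (0:ℝ) 1, x + y + z = 1 → Consistent (g x) (g y) (g z)

section GFacts
variable {g : ℝ → ℤ}

lemma rng (hrange : HRange g) : ∀ s : ℝ, -1/3 ≤ s → s ≤ 2/3 →
    (g (s+1/3) = 1 ∨ g (s+1/3) = 0 ∨ g (s+1/3) = -1) :=
  fun s h1 h2 => hrange _ ⟨by linarith, by linarith⟩

lemma hcs (hcons : HCons g) : ∀ u v w : ℝ, -1/3 ≤ u → u ≤ 2/3 → -1/3 ≤ v → v ≤ 2/3 →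
    -1/3 ≤ w → w ≤ 2/3 →
    u + v + w = 0 → Consistent (g (u+1/3)) (g (v+1/3)) (g (w+1/3)) := by
  intro u v w hu1 hu2 hv1 hv2 hw1 hw2 hsum
  exact hcons _ ⟨by linarith, by linarith⟩ _ ⟨by linarith, by linarith⟩ _
    ⟨by linarith, by linarith⟩ (by linarith)

lemma gz (hrange : HRange g) (hcons : HCons g) : g ((0:ℝ)+1/3) = 0 :=
  L_C6 (hcs hcons 0 0 0 (by norm_num) (by norm_num) (by norm_num) (by norm_num) (by norm_num)
    (by norm_num) (by ring)) (rng hrange 0 (by norm_num) (by norm_num))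

lemma godd (hrange : HRange g) (hcons : HCons g) :
    ∀ s : ℝ, -1/3 ≤ s → s ≤ 1/3 → g (-s+1/3) = -g (s+1/3) := by
  intro s h1 h2
  have h := hcs hcons s (-s) 0 (by linarith) (by linarith) (by linarith) (by linarith)
    (by norm_num) (by norm_num) (by ring)
  rw [gz hrange hcons] at h
  exact L_pair h (rng hrange s (by linarith) (by linarith))
    (rng hrange (-s) (by linarith) (by linarith))

lemma ghalf1 (hrange : HRange g) (hcons : HCons g) :
    ∀ s : ℝ, 0 < s → s < 2/3 → g (s+1/3) = 1 → g (s/2+1/3) = 1 := by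
  intro s h1 h2 hv
  have h := hcs hcons s (-(s/2)) (-(s/2)) (by linarith) (by linarith) (by linarith) (by linarith)
    (by linarith) (by linarith) (by ring)
  rw [hv] at h
  have h3 := L_C7 h (rng hrange (-(s/2)) (by linarith) (by linarith))
  have h4 := godd hrange hcons (s/2) (by linarith) (by linarith)
  omega

lemma ghalf2 (hrange : HRange g) (hcons : HCons g) :
    ∀ s : ℝ, 0 < s → s < 2/3 → g (s+1/3) = -1 → g (s/2+1/3) = -1 := by
  intro s h1 h2 hv
  have h := hcs hcons s (-(s/2)) (-(s/2)) (by linarith) (by linarith) (by linarith) (by linarith)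
    (by linarith) (by linarith) (by ring)
  rw [hv] at h
  have h3 := L_C8 h (rng hrange (-(s/2)) (by linarith) (by linarith))
  have h4 := godd hrange hcons (s/2) (by linarith) (by linarith)
  omega

lemma ghalf0 (hrange : HRange g) (hcons : HCons g) :
    ∀ s : ℝ, 0 < s → s < 2/3 → g (s+1/3) = 0 → g (s/2+1/3) = 0 := by
  intro s h1 h2 hv
  have h := hcs hcons s (-(s/2)) (-(s/2)) (by linarith) (by linarith) (by linarith) (by linarith)
    (by linarith) (by linarith) (by ring)
  rw [hv] at h
  have h3 := L_C9 h (rng hrange (-(s/2)) (by linarith) (by linarith))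
  have h4 := godd hrange hcons (s/2) (by linarith) (by linarith)
  omega

lemma gsmall (hrange : HRange g) (hcons : HCons g) :
    ∀ s : ℝ, 0 < s → s < 2/3 → ∀ e : ℤ, (e = 1 ∨ e = -1) → g (s+1/3) = e →
    ∀ ε : ℝ, 0 < ε → ∃ s', 0 < s' ∧ s' < ε ∧ s' < 1/3 ∧ g (s'+1/3) = e := by
  intro s h1 h2 e he hv ε hε
  have key : ∀ k : ℕ, 0 < s/2^k ∧ s/2^k < 2/3 ∧ g (s/2^k+1/3) = e := by
    intro k
    induction k with
    | zero => rw [pow_zero, div_one]; exact ⟨h1, h2, hv⟩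
    | succ n ih =>
      obtain ⟨ih1, ih2, ih3⟩ := ih
      have e1 : s/2^(n+1) = (s/2^n)/2 := by ring
      rw [e1]
      refine ⟨by positivity, by linarith, ?_⟩
      rcases he with rfl | rfl
      · exact ghalf1 hrange hcons _ ih1 ih2 ih3
      · exact ghalf2 hrange hcons _ ih1 ih2 ih3
  obtain ⟨k, hk⟩ := pow_unbounded_of_one_lt (s / min ε (1/3)) (by norm_num : (1:ℝ) < 2)
  obtain ⟨k1, k2, k3⟩ := key k
  have hmin : 0 < min ε (1/3) := by positivity
  have hks : s/2^k < min ε (1/3) := by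
    rw [div_lt_iff₀ (by positivity)]
    rw [div_lt_iff₀ hmin] at hk
    linarith [hk]
  exact ⟨s/2^k, k1, lt_of_lt_of_le hks (min_le_left _ _),
    lt_of_lt_of_le hks (min_le_right _ _), k3⟩

lemma gsum1 (hrange : HRange g) (hcons : HCons g) : ∀ v w : ℝ, 0 < v → v ≤ 1/3 → 0 < w → w ≤ 1/3 →
    g (v+1/3) = 1 → g (w+1/3) = 1 → g ((v+w)+1/3) = 1 := by
  intro v w hv1 hv2 hw1 hw2 hgv hgw
  have h := hcs hcons (-v) (-w) (v+w) (by linarith) (by linarith) (by linarith) (by linarith)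
    (by linarith) (by linarith) (by ring)
  have e1 := godd hrange hcons v (by linarith) (by linarith)
  have e2 := godd hrange hcons w (by linarith) (by linarith)
  rw [e1, e2, hgv, hgw] at h
  exact L_C1 h (rng hrange (v+w) (by linarith) (by linarith))

lemma gsum2 (hrange : HRange g) (hcons : HCons g) : ∀ v w : ℝ, 0 < v → v ≤ 1/3 → 0 < w → w ≤ 1/3 →
    g (v+1/3) = -1 → g (w+1/3) = -1 → g ((v+w)+1/3) = -1 := by
  intro v w hv1 hv2 hw1 hw2 hgv hgw
  have h := hcs hcons (-v) (-w) (v+w) (by linarith) (by linarith) (by linarith) (by linarith)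
    (by linarith) (by linarith) (by ring)
  have e1 := godd hrange hcons v (by linarith) (by linarith)
  have e2 := godd hrange hcons w (by linarith) (by linarith)
  rw [e1, e2, hgv, hgw] at h
  norm_num at h
  exact L_C2 h (rng hrange (v+w) (by linarith) (by linarith))

lemma gsub (hrange : HRange g) (hcons : HCons g) : ∀ c d : ℝ, 0 < c → c ≤ 1/3 → 0 < d → d ≤ 1/3 →
    g (c+1/3) = 1 → g (d+1/3) = -1 → g ((c-d)+1/3) = 1 := by
  intro c d hc1 hc2 hd1 hd2 hgc hgd
  have h := hcs hcons d (-c) (c-d) (by linarith) (by linarith) (by linarith) (by linarith)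
    (by linarith) (by linarith) (by ring)
  have e1 := godd hrange hcons c (by linarith) (by linarith)
  rw [hgd, e1, hgc] at h
  exact L_C1 h (rng hrange (c-d) (by linarith) (by linarith))

end GFacts

lemma fill (S : Set ℝ) (hhalf : ∀ v ∈ S, 0 < v → v ≤ 1/3 → v/2 ∈ S)
    (hsum : ∀ v ∈ S, ∀ w ∈ S, 0 < v → 0 < w → v ≤ 1/3 → w ≤ 1/3 → v + w ≤ 1/3 → v + w ∈ S)
    {α β : ℝ} (hα : 0 < α) (hαβ : α < β) (hβ : β ≤ 1/3) (hI : Set.Ioo α β ⊆ S)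
    {x : ℝ} (hx : 0 < x) (hx3 : x ≤ 1/3) : x ∈ S := by
  have hβ0 : 0 < β := hα.trans hαβ
  have step1 : ∀ k : ℕ, Set.Ioo (α/2^k) (β/2^k) ⊆ S := by
    intro k
    induction k with
    | zero => simpa using hI
    | succ n ih =>
      intro v hv
      have hc : (0:ℝ) < 2^n := by positivity
      obtain ⟨hv1, hv2⟩ := hv
      rw [show (2:ℝ)^(n+1) = 2*2^n by ring] at hv1 hv2
      have hv0 : 0 < v := lt_trans (by positivity) hv1
      have h1 : α/2^n < 2*v := by
        rw [div_lt_iff₀ hc]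
        rw [div_lt_iff₀ (by positivity : (0:ℝ) < 2*2^n)] at hv1
        linarith
      have h2 : 2*v < β/2^n := by
        rw [lt_div_iff₀ hc]
        rw [lt_div_iff₀ (by positivity : (0:ℝ) < 2*2^n)] at hv2
        linarith
      have hmem := ih ⟨h1, h2⟩
      have hle : 2*v ≤ 1/3 := by
        have : β/2^n ≤ β := div_le_self hβ0.le (one_le_pow₀ (by norm_num))
        linarith
      have := hhalf _ hmem (by linarith) hle
      simpa using this
  set A := x/β with hA
  set B := x/α with hB
  have hAB : A < B := by
    apply div_lt_div_of_pos_left hx hα hαβ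
  obtain ⟨k, hk⟩ := pow_unbounded_of_one_lt (1/(B-A)) (by norm_num : (1:ℝ) < 2)
  have hABk : 1 < (B-A)*2^k := by
    rw [div_lt_iff₀ (by linarith : 0 < B - A)] at hk
    linarith
  set N : ℕ := ⌊A*2^k⌋₊ + 1 with hN
  have hA0 : 0 ≤ A*2^k := by positivity
  have hN1 : A*2^k < (N:ℝ) := by
    rw [hN]
    push_cast
    exact Nat.lt_floor_add_one (A*2^k)
  have hN2 : (N:ℝ) < B*2^k := by
    have : (⌊A*2^k⌋₊ : ℝ) ≤ A*2^k := Nat.floor_le hA0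
    rw [hN]
    push_cast
    nlinarith
  have hNpos : 0 < (N:ℝ) := by positivity
  set t := x/N with ht
  have ht0 : 0 < t := div_pos hx hNpos
  have htl : α/2^k < t := by
    rw [div_lt_div_iff₀ (by positivity) hNpos]
    have h2 := mul_lt_mul_of_pos_left hN2 hα
    calc α * (N:ℝ) < α * (x/α * 2^k) := h2
      _ = x * 2^k := by field_simp
  have htu : t < β/2^k := by
    rw [div_lt_div_iff₀ hNpos (by positivity)]
    have h2 := mul_lt_mul_of_pos_left hN1 hβ0
    calc x * 2^k = β * (x/β * 2^k) := by field_simp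
      _ < β * (N:ℝ) := h2
  have htS : t ∈ S := step1 k ⟨htl, htu⟩
  have ht3 : t ≤ 1/3 := by
    have : β/2^k ≤ β := div_le_self hβ0.le (one_le_pow₀ (by norm_num))
    linarith
  have hNt : (N:ℝ) * t = x := by
    rw [ht]
    field_simp
  have step3 : ∀ j : ℕ, 1 ≤ j → j ≤ N → (j:ℝ)*t ∈ S := by
    intro j hj1 hjN
    induction j, hj1 using Nat.le_induction with
    | base => simpa using htS
    | succ n hn ih =>
      have hnN : n ≤ N := le_trans (Nat.le_succ n) hjN
      have ihS := ih hnN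
      have hnt3 : (n:ℝ)*t ≤ 1/3 := by
        calc (n:ℝ)*t ≤ (N:ℝ)*t := by
              apply mul_le_mul_of_nonneg_right _ ht0.le
              exact_mod_cast hnN
          _ = x := hNt
          _ ≤ 1/3 := hx3
      have hsumle : (n:ℝ)*t + t ≤ 1/3 := by
        have : ((n:ℝ)+1)*t ≤ (N:ℝ)*t := by
          apply mul_le_mul_of_nonneg_right _ ht0.le
          exact_mod_cast hjN
        rw [hNt] at this
        nlinarith
      have := hsum _ ihS _ htS (by positivity) ht0 hnt3 ht3 hsumle
      convert this using 1
      push_cast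
      ring
  have := step3 N (by omega) le_rfl
  rwa [hNt] at this

lemma density_pt {A : Set ℝ} (hA : MeasurableSet A) (hA0 : volume A ≠ 0) :
    ∃ a ∈ A, ∃ ρ : ℝ, 0 < ρ ∧ ∀ r : ℝ, 0 < r → r ≤ ρ →
      ENNReal.ofReal (7/4 * r) < volume (A ∩ Metric.closedBall a r) := by
  have hae := Besicovitch.ae_tendsto_measure_inter_div_of_measurableSet volume hA
  have hex : ∃ a ∈ A, Filter.Tendsto
      (fun r => volume (A ∩ Metric.closedBall a r) / volume (Metric.closedBall a r))
      (nhdsWithin 0 (Set.Ioi 0)) (nhds (A.indicator 1 a)) := by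
    by_contra hcon
    push_neg at hcon
    have hsub : A ⊆ {x | ¬ (Filter.Tendsto
        (fun r => volume (A ∩ Metric.closedBall x r) / volume (Metric.closedBall x r))
        (nhdsWithin 0 (Set.Ioi 0)) (nhds (A.indicator 1 x)))} := fun x hx => hcon x hx
    have := measure_mono (μ := volume) hsub
    rw [ae_iff] at hae
    rw [hae] at this
    exact hA0 (le_antisymm (by simpa using this) zero_le)
  obtain ⟨a, haA, hT⟩ := hex
  rw [Set.indicator_of_mem haA, Pi.one_apply] at hT
  have hev : ∀ᶠ r in nhdsWithin (0:ℝ) (Set.Ioi 0),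
      ENNReal.ofReal (7/8) < volume (A ∩ Metric.closedBall a r) / volume (Metric.closedBall a r) :=
    hT.eventually (eventually_gt_nhds (by rw [ENNReal.ofReal_lt_one]; norm_num))
  rw [Filter.eventually_iff, Metric.mem_nhdsWithin_iff] at hev
  obtain ⟨ε, hε, hsub⟩ := hev
  refine ⟨a, haA, ε/2, by linarith, fun r hr hrε => ?_⟩
  have hmem : r ∈ Metric.ball (0:ℝ) ε ∩ Set.Ioi 0 := by
    constructor
    · rw [Metric.mem_ball, Real.dist_eq, sub_zero, abs_of_pos hr]
      linarith
    · exact hr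
  have hball := hsub hmem
  rw [Set.mem_setOf_eq] at hball
  have hD : volume (Metric.closedBall a r) = ENNReal.ofReal (2*r) := Real.volume_closedBall a r
  rw [hD] at hball
  have hne0 : ENNReal.ofReal (2*r) ≠ 0 := by
    simp only [ne_eq, ENNReal.ofReal_eq_zero, not_le]
    linarith
  have hnetop : ENNReal.ofReal (2*r) ≠ ⊤ := ENNReal.ofReal_ne_top
  rw [ENNReal.lt_div_iff_mul_lt (Or.inl hne0) (Or.inl hnetop)] at hball
  calc ENNReal.ofReal (7/4 * r) = ENNReal.ofReal (7/8) * ENNReal.ofReal (2*r) := by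
        rw [← ENNReal.ofReal_mul (by norm_num)]
        congr 1
        ring
    _ < volume (A ∩ Metric.closedBall a r) := hball

lemma collide {A B : Set ℝ} (hA : MeasurableSet A) (hB : MeasurableSet B)
    (hA0 : volume A ≠ 0) (hB0 : volume B ≠ 0) :
    ∃ a ∈ A, ∃ b ∈ B, ∃ δ : ℝ, 0 < δ ∧ ∀ u : ℝ, |u - (a - b)| < δ →
      ∃ p ∈ A, ∃ q ∈ B, p - q = u := by
  obtain ⟨a, haA, ρA, hρA, hda⟩ := density_pt hA hA0
  obtain ⟨b, hbB, ρB, hρB, hdb⟩ := density_pt hB hB0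
  set r := min ρA ρB with hr
  have hr0 : 0 < r := lt_min hρA hρB
  refine ⟨a, haA, b, hbB, r/2, by linarith, fun u hu => ?_⟩
  set T := B ∩ Metric.closedBall b (r/2) with hT
  set S₂ := (fun x => x - u) ⁻¹' T with hS₂
  set S₁ := A ∩ Metric.closedBall a r with hS₁
  have hTmeas : MeasurableSet T := hB.inter measurableSet_closedBall
  have hS₂meas : MeasurableSet S₂ := hTmeas.preimage (measurable_id.sub_const u)
  have hvol2 : volume S₂ = volume T := by
    rw [hS₂, show (fun x : ℝ => x - u) = (fun x : ℝ => -u + x) by funext x; ring]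
    exact measure_preimage_add volume (-u) T
  have hrB : r ≤ ρB := min_le_right _ _
  have hrA : r ≤ ρA := min_le_left _ _
  have hb1 : ENNReal.ofReal (7/4 * (r/2)) < volume T := hdb (r/2) (by linarith)
    (by linarith)
  have ha1 : ENNReal.ofReal (7/4 * r) < volume S₁ := hda r hr0 hrA
  have hsub : S₁ ∪ S₂ ⊆ Metric.closedBall a r := by
    intro x hx
    rcases hx with hx | hx
    · exact hx.2
    · have h1 : x - u ∈ Metric.closedBall b (r/2) := hx.2
      rw [Metric.mem_closedBall, Real.dist_eq] at h1 ⊢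
      have : |x - a| ≤ |x - u - b| + |u - (a - b)| := by
        have e : x - a = (x - u - b) + (u - (a-b)) := by ring
        rw [e]
        exact abs_add_le _ _
      linarith [hu, this, h1]
  have hne : (S₁ ∩ S₂).Nonempty := by
    by_contra hcon
    rw [Set.not_nonempty_iff_eq_empty] at hcon
    have hdisj : Disjoint S₁ S₂ := Set.disjoint_iff_inter_eq_empty.mpr hcon
    have hun : volume (S₁ ∪ S₂) = volume S₁ + volume S₂ := measure_union hdisj hS₂meas
    have hle : volume (S₁ ∪ S₂) ≤ ENNReal.ofReal (2*r) := by
      rw [← Real.volume_closedBall a r]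
      exact measure_mono hsub
    have hgt : ENNReal.ofReal (2*r) < volume S₁ + volume S₂ := by
      calc ENNReal.ofReal (2*r) < ENNReal.ofReal (7/4*r) + ENNReal.ofReal (7/4*(r/2)) := by
            rw [← ENNReal.ofReal_add (by linarith) (by linarith)]
            rw [ENNReal.ofReal_lt_ofReal_iff (by positivity)]
            linarith
        _ < volume S₁ + volume S₂ := by
            rw [hvol2]
            exact ENNReal.add_lt_add ha1 hb1
    rw [hun] at hle
    exact absurd (lt_of_lt_of_le hgt hle) (lt_irrefl _)
  obtain ⟨x, hx1, hx2⟩ := hne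
  exact ⟨x, hx1.1, x - u, hx2.1, by ring⟩

section Main
variable {g : ℝ → ℤ}

lemma meas_set (hmeas : ∀ v : ℤ, MeasurableSet {x ∈ Set.Icc (0:ℝ) 1 | g x = v}) (e : ℤ)
    {c : ℝ} (hc : c ≤ 1/3) :
    MeasurableSet {v : ℝ | (0 < v ∧ v < c) ∧ g (v+1/3) = e} := by
  have heq : {v : ℝ | (0 < v ∧ v < c) ∧ g (v+1/3) = e} =
      ((fun v : ℝ => v + 1/3) ⁻¹' {x ∈ Set.Icc (0:ℝ) 1 | g x = e}) ∩ Set.Ioo 0 c := by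
    ext v
    simp only [Set.mem_setOf_eq, Set.mem_inter_iff, Set.mem_preimage, Set.mem_Ioo,
      Set.mem_Icc, Set.mem_sep_iff]
    constructor
    · rintro ⟨⟨h1, h2⟩, h3⟩
      exact ⟨⟨⟨by linarith, by linarith⟩, h3⟩, h1, h2⟩
    · rintro ⟨⟨_, h3⟩, h1, h2⟩
      exact ⟨⟨h1, h2⟩, h3⟩
  rw [heq]
  exact (MeasurableSet.preimage (hmeas e) (measurable_id.add_const _)).inter measurableSet_Ioo

lemma refl_vol (s' : ℝ) (C : Set ℝ) : volume ((fun v => s' - v) ⁻¹' C) = volume C := by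
  have heq : (fun v : ℝ => s' - v) ⁻¹' C =
      (fun v : ℝ => v + (-s')) ⁻¹' (((-1:ℝ) * ·) ⁻¹' C) := by
    ext v
    simp only [Set.mem_preimage]
    rw [show (-1:ℝ) * (v + -s') = s' - v by ring]
  rw [heq]
  rw [measure_preimage_add_right volume (-s') _]
  rw [Real.volume_preimage_mul_left (by norm_num : (-1:ℝ) ≠ 0)]
  norm_num

lemma posvol1 (hrange : HRange g) (hcons : HCons g) {s' : ℝ} (h1 : 0 < s') (h2 : s' < 1/3)
    (hs : g (s'+1/3) = 1) :
    volume {v : ℝ | (0 < v ∧ v < s') ∧ g (v+1/3) = 1} ≠ 0 := by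
  set C := {v : ℝ | (0 < v ∧ v < s') ∧ g (v+1/3) = 1} with hC
  have cover : Set.Ioo 0 s' ⊆ C ∪ ((fun v => s' - v) ⁻¹' C) := by
    intro u hu
    obtain ⟨hu1, hu2⟩ := hu
    by_cases hP : g (u+1/3) = 1
    · exact Or.inl ⟨⟨hu1, hu2⟩, hP⟩
    · have h := hcs hcons s' (-u) (u - s') (by linarith) (by linarith) (by linarith)
        (by linarith) (by linarith) (by linarith) (by ring)
      rw [hs] at h
      have h10 := L_C10 h (rng hrange (-u) (by linarith) (by linarith))
        (rng hrange (u-s') (by linarith) (by linarith))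
      rcases h10 with h10 | h10
      · exfalso
        have e1 := godd hrange hcons u (by linarith) (by linarith)
        omega
      · have e2 := godd hrange hcons (s'-u) (by linarith) (by linarith)
        rw [show -(s'-u) = u - s' by ring] at e2
        right
        show ((0:ℝ) < s' - u ∧ s' - u < s') ∧ g ((s' - u)+1/3) = 1
        exact ⟨⟨by linarith, by linarith⟩, by omega⟩
  intro h0
  have himg : volume ((fun v => s' - v) ⁻¹' C) = 0 := by
    rw [refl_vol]; exact h0
  have hle : volume (Set.Ioo 0 s') ≤ volume C + volume ((fun v => s' - v) ⁻¹' C) :=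
    le_trans (measure_mono cover) (measure_union_le _ _)
  rw [h0, himg, add_zero, Real.volume_Ioo] at hle
  simp only [nonpos_iff_eq_zero, ENNReal.ofReal_eq_zero, sub_zero] at hle
  linarith

lemma posvol2 (hrange : HRange g) (hcons : HCons g) {t' : ℝ} (h1 : 0 < t') (h2 : t' < 1/3)
    (hs : g (t'+1/3) = -1) :
    volume {v : ℝ | (0 < v ∧ v < t') ∧ g (v+1/3) = -1} ≠ 0 := by
  set C := {v : ℝ | (0 < v ∧ v < t') ∧ g (v+1/3) = -1} with hC
  have cover : Set.Ioo 0 t' ⊆ C ∪ ((fun v => t' - v) ⁻¹' C) := by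
    intro u hu
    obtain ⟨hu1, hu2⟩ := hu
    by_cases hP : g (u+1/3) = -1
    · exact Or.inl ⟨⟨hu1, hu2⟩, hP⟩
    · have h := hcs hcons t' (-u) (u - t') (by linarith) (by linarith) (by linarith)
        (by linarith) (by linarith) (by linarith) (by ring)
      rw [hs] at h
      have h10 := L_C11 h (rng hrange (-u) (by linarith) (by linarith))
        (rng hrange (u-t') (by linarith) (by linarith))
      rcases h10 with h10 | h10
      · exfalso
        have e1 := godd hrange hcons u (by linarith) (by linarith)
        omega
      · have e2 := godd hrange hcons (t'-u) (by linarith) (by linarith)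
        rw [show -(t'-u) = u - t' by ring] at e2
        right
        show ((0:ℝ) < t' - u ∧ t' - u < t') ∧ g ((t' - u)+1/3) = -1
        exact ⟨⟨by linarith, by linarith⟩, by omega⟩
  intro h0
  have himg : volume ((fun v => t' - v) ⁻¹' C) = 0 := by
    rw [refl_vol]; exact h0
  have hle : volume (Set.Ioo 0 t') ≤ volume C + volume ((fun v => t' - v) ⁻¹' C) :=
    le_trans (measure_mono cover) (measure_union_le _ _)
  rw [h0, himg, add_zero, Real.volume_Ioo] at hle
  simp only [nonpos_iff_eq_zero, ENNReal.ofReal_eq_zero, sub_zero] at hle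
  linarith

lemma mixed (hrange : HRange g)
    (hmeas : ∀ v : ℤ, MeasurableSet {x ∈ Set.Icc (0:ℝ) 1 | g x = v}) (hcons : HCons g)
    (hP : ∃ s, (0 < s ∧ s < 2/3) ∧ g (s+1/3) = 1)
    (hN : ∃ t, (0 < t ∧ t < 2/3) ∧ g (t+1/3) = -1) : False := by
  obtain ⟨s, ⟨hs1, hs2⟩, hsv⟩ := hP
  obtain ⟨t, ⟨ht1, ht2⟩, htv⟩ := hN
  obtain ⟨s', hs'1, _, hs'3, hs'v⟩ := gsmall hrange hcons s hs1 hs2 1 (Or.inl rfl) hsv (1/3)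
    (by norm_num)
  obtain ⟨t', ht'1, _, ht'3, ht'v⟩ := gsmall hrange hcons t ht1 ht2 (-1) (Or.inr rfl) htv (1/3)
    (by norm_num)
  set C := {v : ℝ | (0 < v ∧ v < s') ∧ g (v+1/3) = 1} with hCdef
  set D := {v : ℝ | (0 < v ∧ v < t') ∧ g (v+1/3) = -1} with hDdef
  have hCmeas : MeasurableSet C := meas_set hmeas 1 (by linarith)
  have hDmeas : MeasurableSet D := meas_set hmeas (-1) (by linarith)
  have hC0 : volume C ≠ 0 := posvol1 hrange hcons hs'1 hs'3 hs'v
  have hD0 : volume D ≠ 0 := posvol2 hrange hcons ht'1 ht'3 ht'v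
  obtain ⟨a, haC, b, hbD, δ, hδ, hco⟩ := collide hCmeas hDmeas hC0 hD0
  obtain ⟨⟨ha1, ha2⟩, hav⟩ := haC
  obtain ⟨⟨hb1, hb2⟩, hbv⟩ := hbD
  set x₀ := a - b with hx₀
  have hkey : ∀ u : ℝ, |u - x₀| < δ → g (u+1/3) = 1 := by
    intro u hu
    obtain ⟨p, hpC, q, hqD, hpq⟩ := hco u hu
    obtain ⟨⟨hp1, hp2⟩, hpv⟩ := hpC
    obtain ⟨⟨hq1, hq2⟩, hqv⟩ := hqD
    rw [← hpq]
    exact gsub hrange hcons p q hp1 (by linarith) hq1 (by linarith) hpv hqv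
  have hx₀ne : x₀ ≠ 0 := by
    intro hzero
    have h1 := hkey x₀ (by rw [sub_self, abs_zero]; exact hδ)
    rw [hzero] at h1
    have h2 := gz hrange hcons
    omega
  have hx₀lt : x₀ < 1/3 := by
    simp only [hx₀]; linarith
  have hx₀gt : -1/3 < x₀ := by
    simp only [hx₀]; linarith
  rcases lt_or_gt_of_ne hx₀ne with hneg | hpos
  · -- x₀ < 0 : the set {g = -1} contains an interval around -x₀, fill it, contradict s'
    set y₀ := -x₀ with hy₀
    have hy1 : 0 < y₀ := by linarith
    have hy2 : y₀ < 1/3 := by linarith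
    set ε := min δ y₀ with hε
    have hε0 : 0 < ε := lt_min hδ hy1
    have hεδ : ε ≤ δ := min_le_left _ _
    have hεy : ε ≤ y₀ := min_le_right _ _
    set S := {v : ℝ | g (v+1/3) = -1} with hS
    have hIoo : Set.Ioo (y₀ - ε/2) (min (y₀ + ε/2) (1/3)) ⊆ S := by
      intro u hu
      obtain ⟨hu1, hu2⟩ := hu
      have hu2' : u < y₀ + ε/2 := lt_of_lt_of_le hu2 (min_le_left _ _)
      have hu3 : u ≤ 1/3 := le_of_lt (lt_of_lt_of_le hu2 (min_le_right _ _))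
      have hu0 : 0 < u := by linarith
      have h1 : g (-u+1/3) = 1 := by
        apply hkey (-u)
        rw [show -u - x₀ = -(u - y₀) by simp [hy₀]; ring, abs_neg]
        rw [abs_lt]
        constructor <;> linarith
      have e1 := godd hrange hcons u (by linarith) (by linarith)
      simp only [hS, Set.mem_setOf_eq]
      omega
    have hfill := fill S
      (fun v hv h0 h3 => ghalf2 hrange hcons v h0 (by linarith) hv)
      (fun v hv w hw hv0 hw0 hv3 hw3 hvw => gsum2 hrange hcons v w hv0 hv3 hw0 hw3 hv hw)
      (by linarith : 0 < y₀ - ε/2)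
      (by
        apply lt_min
        · linarith
        · linarith)
      (min_le_right _ _) hIoo hs'1 (by linarith)
    simp only [hS, Set.mem_setOf_eq] at hfill
    omega
  · -- x₀ > 0 : the set {g = 1} contains an interval around x₀, fill it, contradict t'
    set ε := min δ x₀ with hε
    have hε0 : 0 < ε := lt_min hδ hpos
    have hεδ : ε ≤ δ := min_le_left _ _
    have hεy : ε ≤ x₀ := min_le_right _ _
    set S := {v : ℝ | g (v+1/3) = 1} with hS
    have hIoo : Set.Ioo (x₀ - ε/2) (min (x₀ + ε/2) (1/3)) ⊆ S := by
      intro u hu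
      obtain ⟨hu1, hu2⟩ := hu
      have hu2' : u < x₀ + ε/2 := lt_of_lt_of_le hu2 (min_le_left _ _)
      have h1 : g (u+1/3) = 1 := by
        apply hkey u
        rw [abs_lt]
        constructor <;> linarith
      exact h1
    have hfill := fill S
      (fun v hv h0 h3 => ghalf1 hrange hcons v h0 (by linarith) hv)
      (fun v hv w hw hv0 hw0 hv3 hw3 hvw => gsum1 hrange hcons v w hv0 hv3 hw0 hw3 hv hw)
      (by linarith : 0 < x₀ - ε/2)
      (by
        apply lt_min
        · linarith
        · linarith)
      (min_le_right _ _) hIoo ht'1 (by linarith)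
    simp only [hS, Set.mem_setOf_eq] at hfill
    omega

lemma one_sided (hrange : HRange g) (hcons : HCons g)
    (hP : ∃ s, (0 < s ∧ s < 2/3) ∧ g (s+1/3) = 1)
    (hN : ¬ ∃ t, (0 < t ∧ t < 2/3) ∧ g (t+1/3) = -1) :
    ∀ x ∈ Set.Icc (0:ℝ) 1, (g x : ℝ) = Real.sign (x - 1/3) := by
  have hN' : ∀ t : ℝ, 0 < t → t < 2/3 → g (t+1/3) ≠ -1 := by
    intro t h1 h2 hv
    exact hN ⟨t, ⟨h1, h2⟩, hv⟩
  obtain ⟨s, ⟨hs1, hs2⟩, hsv⟩ := hP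
  have claim1 : ∀ z : ℝ, 0 < z → z < 2/3 → g (z+1/3) = 1 := by
    intro z hz1 hz2
    rcases rng hrange z (by linarith) (by linarith) with h | h | h
    · exact h
    · exfalso
      -- g (z+1/3) = 0; produce a negative value, contradiction
      have hz' : g (z/2+1/3) = 0 := ghalf0 hrange hcons z hz1 hz2 h
      obtain ⟨s'', hs''1, hs''2, hs''3, hs''v⟩ := gsmall hrange hcons s hs1 hs2 1 (Or.inl rfl)
        hsv (z/2) (by linarith)
      have hcons3 := hcs hcons s'' (-(z/2)) (z/2 - s'') (by linarith) (by linarith)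
        (by linarith) (by linarith) (by linarith) (by linarith) (by ring)
      have e1 := godd hrange hcons (z/2) (by linarith) (by linarith)
      rw [hs''v, e1, hz'] at hcons3
      norm_num at hcons3
      have h3 := L_C3 hcons3 (rng hrange (z/2 - s'') (by linarith) (by linarith))
      exact hN' (z/2 - s'') (by linarith) (by linarith) h3
    · exact absurd h (hN' z hz1 hz2)
  intro x hx
  obtain ⟨hx1, hx2⟩ := hx
  have hxe : x = (x - 1/3) + 1/3 := by ring
  rcases lt_trichotomy (x - 1/3) 0 with hlt | heq | hgt
  · have h1 : g (-(x-1/3)+1/3) = 1 := claim1 (-(x-1/3)) (by linarith) (by linarith)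
    have e1 := godd hrange hcons (x-1/3) (by linarith) (by linarith)
    have h2 : g ((x-1/3)+1/3) = -1 := by omega
    rw [← hxe] at h2
    rw [h2, Real.sign_of_neg hlt]
    norm_num
  · have h2 : g ((x-1/3)+1/3) = 0 := by
      rw [show x - 1/3 = (0:ℝ) by linarith]
      exact gz hrange hcons
    rw [← hxe] at h2
    rw [h2, show x - 1/3 = (0:ℝ) by linarith, Real.sign_zero]
    norm_num
  · have h2 : g ((x-1/3)+1/3) = 1 := by
      rcases lt_or_eq_of_le (by linarith : x - 1/3 ≤ 2/3) with h23 | h23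
      · exact claim1 (x-1/3) hgt h23
      · -- x - 1/3 = 2/3
        have ha : g (1/3+1/3) = 1 := claim1 (1/3) (by norm_num) (by norm_num)
        have e1 := godd hrange hcons (1/3) (by norm_num) (by norm_num)
        have hb : g (-(1/3)+1/3) = -1 := by omega
        have hcons3 := hcs hcons (-(1/3)) (-(1/3)) (2/3) (by norm_num) (by norm_num)
          (by norm_num) (by norm_num) (by norm_num) (by norm_num) (by norm_num)
        rw [hb] at hcons3
        have h1 := L_C1 hcons3 (rng hrange (2/3) (by norm_num) (by norm_num))
        rw [h23]
        exact h1
    rw [← hxe] at h2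
    rw [h2, Real.sign_of_pos hgt]
    norm_num

lemma all_zero (hrange : HRange g) (hcons : HCons g)
    (hP : ¬ ∃ s, (0 < s ∧ s < 2/3) ∧ g (s+1/3) = 1)
    (hN : ¬ ∃ t, (0 < t ∧ t < 2/3) ∧ g (t+1/3) = -1) :
    ∀ x ∈ Set.Icc (0:ℝ) 1, g x = 0 := by
  have hz : ∀ z : ℝ, 0 < z → z < 2/3 → g (z+1/3) = 0 := by
    intro z h1 h2
    rcases rng hrange z (by linarith) (by linarith) with h | h | h
    · exact absurd ⟨z, ⟨h1, h2⟩, h⟩ hP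
    · exact h
    · exact absurd ⟨z, ⟨h1, h2⟩, h⟩ hN
  intro x hx
  obtain ⟨hx1, hx2⟩ := hx
  have hxe : x = (x - 1/3) + 1/3 := by ring
  rcases lt_trichotomy (x - 1/3) 0 with hlt | heq | hgt
  · have h1 : g (-(x-1/3)+1/3) = 0 := hz (-(x-1/3)) (by linarith) (by linarith)
    have e1 := godd hrange hcons (x-1/3) (by linarith) (by linarith)
    rw [hxe]
    omega
  · rw [hxe, show x - 1/3 = (0:ℝ) by linarith]
    exact gz hrange hcons
  · rcases lt_or_eq_of_le (by linarith : x - 1/3 ≤ 2/3) with h23 | h23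
    · rw [hxe]; exact hz (x-1/3) hgt h23
    · have ha : g (1/3+1/3) = 0 := hz (1/3) (by norm_num) (by norm_num)
      have e1 := godd hrange hcons (1/3) (by norm_num) (by norm_num)
      have hb : g (-(1/3)+1/3) = 0 := by omega
      have hcons3 := hcs hcons (-(1/3)) (-(1/3)) (2/3) (by norm_num) (by norm_num)
        (by norm_num) (by norm_num) (by norm_num) (by norm_num) (by norm_num)
      rw [hb] at hcons3
      have h1 := L_C5 hcons3 (rng hrange (2/3) (by norm_num) (by norm_num))
      rw [hxe, h23]
      exact h1

end Main

theorem stmt17 (g : ℝ → ℤ)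
    (hrange : ∀ x ∈ Set.Icc (0:ℝ) 1, g x = 1 ∨ g x = 0 ∨ g x = -1)
    (hmeas : ∀ v : ℤ, MeasurableSet {x ∈ Set.Icc (0:ℝ) 1 | g x = v})
    (hcons : ∀ x ∈ Set.Icc (0:ℝ) 1, ∀ y ∈ Set.Icc (0:ℝ) 1, ∀ z ∈ Set.Icc (0:ℝ) 1,
      x + y + z = 1 → Consistent (g x) (g y) (g z)) :
    ∃ κ : ℝ, ∀ x ∈ Set.Icc (0:ℝ) 1, (g x : ℝ) = Real.sign (κ * (x - 1/3)) := by
  have hrange' : HRange g := hrange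
  have hcons' : HCons g := hcons
  by_cases hP : ∃ s : ℝ, (0 < s ∧ s < 2/3) ∧ g (s+1/3) = 1
  · by_cases hN : ∃ t : ℝ, (0 < t ∧ t < 2/3) ∧ g (t+1/3) = -1
    · exact (mixed hrange' hmeas hcons' hP hN).elim
    · refine ⟨1, fun x hx => ?_⟩
      rw [one_mul]
      exact one_sided hrange' hcons' hP hN x hx
  · by_cases hN : ∃ t : ℝ, (0 < t ∧ t < 2/3) ∧ g (t+1/3) = -1
    · -- apply one_sided to -g
      set g' : ℝ → ℤ := fun x => -g x with hg'
      have hrange'' : HRange g' := by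
        intro x hx
        rcases hrange x hx with h | h | h <;> simp only [hg'] <;> omega
      have hcons'' : HCons g' := by
        intro x hx y hy z hz hsum
        exact L_neg (hcons x hx y hy z hz hsum)
      have hP' : ∃ s : ℝ, (0 < s ∧ s < 2/3) ∧ g' (s+1/3) = 1 := by
        obtain ⟨t, ht, hv⟩ := hN
        exact ⟨t, ht, by simp only [hg']; omega⟩
      have hN' : ¬ ∃ t : ℝ, (0 < t ∧ t < 2/3) ∧ g' (t+1/3) = -1 := by
        rintro ⟨t, ht, hv⟩
        simp only [hg'] at hv
        exact hP ⟨t, ht, by omega⟩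
      have hres := one_sided hrange'' hcons'' hP' hN'
      refine ⟨-1, fun x hx => ?_⟩
      have h2 := hres x hx
      simp only [hg', Int.cast_neg] at h2
      rw [show (-1 : ℝ) * (x - 1/3) = -(x - 1/3) by ring, Real.sign_neg]
      linarith
    · refine ⟨0, fun x hx => ?_⟩
      rw [zero_mul, Real.sign_zero]
      have h := all_zero hrange' hcons' hP hN x hx
      rw [h]
      norm_num
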